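/- Let M be a real r × N matrix such that MMᵗ is invertible, and let P := Mᵗ(MMᵗ)⁻¹M. Then for every subset B of the column index set, the sum over all r-element column subsets T with T ⊇ B of det(M_{•,T})² equals det(MMᵗ) · det(P_{B,B}). Equivalently, for the determinantal probability measure μ(T) = det(M_{•,T})²/det(MMᵗ) on r-element column subsets, μ({T : T ⊇ B}) = det P_{B,B}. -/

import Mathlib

open Matrix

/-- The `j`-element subsets of the vertex set `[n]` (modelled as `Fin n`). -/
abbrev Face (n j : ℕ) := {s : Finset (Fin n) // s.card = j}

/-- The `j`-element subsets of `[n]` not containing the last vertex `n`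
(the vertex of `Fin n` with value `n - 1`). -/
abbrev HFace (n j : ℕ) :=
  {s : Finset (Fin n) // s.card = j ∧ ∀ a ∈ s, (a : ℕ) < n - 1}

/-- The `k`-dimensional boundary matrix `∂`: rows indexed by `k`-subsets `σ`,
columns by `(k+1)`-subsets `τ`; the entry is `(-1)^m` if `σ = τ \ {τ_m}`
(where `τ = {τ_0 < ⋯ < τ_k}`), and `0` otherwise. -/
noncomputable def bdry (n k : ℕ) : Matrix (Face n k) (Face n (k+1)) ℝ :=
  fun σ τ => ∑ a ∈ τ.1,
    if σ.1 = τ.1.erase a then (-1 : ℝ) ^ ((τ.1.filter (fun b => b < a)).card) else 0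

/-- The submatrix `∂̂` of `∂` consisting of the rows indexed by `k`-subsets
not containing the vertex `n`. -/
noncomputable def bdryHat (n k : ℕ) : Matrix (HFace n k) (Face n (k+1)) ℝ :=
  fun σ τ => bdry n k ⟨σ.1, σ.2.1⟩ τ

/-- The submatrix `M_{•,T}` of `M` with columns restricted to `T`. -/
def colSub {ι κ : Type*} (M : Matrix ι κ ℝ) (T : Finset κ) :
    Matrix ι {τ // τ ∈ T} ℝ :=
  fun i t => M i t.1

/- The squared determinant of a matrix whose row and column index types are in
bijection (`0` if there is no bijection); independent of the chosen bijection. -/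
open scoped Classical in
noncomputable def detSq {ι κ : Type*} [Fintype ι] [DecidableEq ι] [Fintype κ]
    (M : Matrix ι κ ℝ) : ℝ :=
  if h : Nonempty (ι ≃ κ) then ((M.submatrix id h.some).det) ^ 2 else 0

/-- The degree `d_i(T)`: the number of members of `T` containing the vertex `i`. -/
def deg (n k : ℕ) (T : Finset (Face n (k+1))) (i : Fin n) : ℕ :=
  (T.filter (fun τ => i ∈ τ.1)).card

/-- The diagonal matrix `X_j` indexed by `j`-subsets, with entries `∏_{i∈σ} x_i`. -/
noncomputable def Xdiag (n j : ℕ) (x : Fin n → ℝ) :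
    Matrix (Face n j) (Face n j) ℝ :=
  Matrix.diagonal (fun σ => ∏ i ∈ σ.1, x i)
section CB
variable {ι : Type*} [Fintype ι] [DecidableEq ι] {S : Type*} [Fintype S] [DecidableEq S]

/-- diagonal 0/1 indicator matrix of a finite set -/
noncomputable def indDiag {S : Type*} [Fintype S] [DecidableEq S] (U : Finset S) :
    Matrix S S ℝ := Matrix.diagonal (fun s => if s ∈ U then (1:ℝ) else 0)

lemma rowExpansion (L R : Matrix ι S ℝ) (U : Finset S) :
    (L * indDiag U * Rᵀ).det
      = ∑ f ∈ Fintype.piFinset (fun _ : ι => U),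
          (∏ i, L i (f i)) * (Matrix.of fun i j => R j (f i)).det := by
  have h : (L * indDiag U * Rᵀ)
      = Matrix.of (fun i => ∑ s ∈ U, L i s • (fun j => R j s)) := by
    ext i j
    rw [Matrix.mul_apply]
    simp only [indDiag, Matrix.mul_diagonal, Matrix.transpose_apply, Matrix.of_apply,
      Finset.sum_apply, Pi.smul_apply, smul_eq_mul]
    rw [show ∑ x, L i x * (if x ∈ U then (1:ℝ) else 0) * R j x
        = ∑ x, (if x ∈ U then L i x * R j x else 0) by
      refine Finset.sum_congr rfl fun s _ => by split <;> simp_all]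
    rw [Finset.sum_ite_mem, Finset.univ_inter]
  rw [h]
  have key := (Matrix.detRowAlternating (R := ℝ) (n := ι)).toMultilinearMap.map_sum_finset
    (fun i (s : S) => L i s • (fun j => R j s)) (fun _ => U)
  have key2 : ∀ f : ι → S,
      (Matrix.detRowAlternating (R := ℝ) (n := ι)).toMultilinearMap
          (fun i => L i (f i) • (fun j => R j (f i)))
        = (∏ i, L i (f i)) * (Matrix.of fun i j => R j (f i)).det := by
    intro f
    rw [MultilinearMap.map_smul_univ]
    simp only [smul_eq_mul]
    rfl
  calc (Matrix.of fun i => ∑ s ∈ U, L i s • (fun j => R j s)).det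
      = (Matrix.detRowAlternating (R := ℝ) (n := ι)).toMultilinearMap
          (fun i => ∑ s ∈ U, L i s • (fun j => R j s)) := rfl
    _ = _ := by rw [key]; exact Finset.sum_congr rfl fun f _ => key2 f

lemma indDiag_univ : indDiag (Finset.univ : Finset S) = (1 : Matrix S S ℝ) := by
  simp [indDiag, Matrix.diagonal_one]

omit [Fintype S] [DecidableEq S] in
lemma term_zero (R : Matrix ι S ℝ) {f : ι → S} (hf : ¬ Function.Injective f) :
    (Matrix.of fun i j => R j (f i)).det = 0 := by
  simp only [Function.Injective, not_forall] at hf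
  obtain ⟨i, j, hij, hne⟩ := hf
  exact Matrix.det_zero_of_row_eq hne (by ext k; simp [hij])

/-- Cauchy–Binet in indicator-diagonal form. -/
lemma cauchyBinet (L R : Matrix ι S ℝ) :
    (L * Rᵀ).det
      = ∑ U ∈ Finset.univ.filter (fun U : Finset S => U.card = Fintype.card ι),
          (L * indDiag U * Rᵀ).det := by
  have expand : ∀ U : Finset S, (L * indDiag U * Rᵀ).det
      = ∑ f ∈ (Fintype.piFinset (fun _ : ι => U)).filter Function.Injective,
          (∏ i, L i (f i)) * (Matrix.of fun i j => R j (f i)).det := by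
    intro U
    rw [rowExpansion, Finset.sum_filter_of_ne]
    intro f _ hne
    by_contra hinj
    exact hne (by rw [term_zero R hinj, mul_zero])
  have h0 : (L * Rᵀ).det
      = ∑ f ∈ (Fintype.piFinset (fun _ : ι => (Finset.univ : Finset S))).filter
          Function.Injective,
          (∏ i, L i (f i)) * (Matrix.of fun i j => R j (f i)).det := by
    rw [show L * Rᵀ = L * indDiag (Finset.univ : Finset S) * Rᵀ by rw [indDiag_univ, Matrix.mul_one]]
    exact expand _
  rw [h0]
  rw [← Finset.sum_fiberwise_of_maps_to (g := fun f : ι → S => Finset.image f Finset.univ)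
    (t := Finset.univ.filter (fun U : Finset S => U.card = Fintype.card ι))
    (fun f hf => by
      have hinj : Function.Injective f := (Finset.mem_filter.mp hf).2
      simp only [Finset.mem_filter, Finset.mem_univ, true_and]
      rw [Finset.card_image_of_injective _ hinj, Finset.card_univ])]
  refine Finset.sum_congr rfl fun U hU => ?_
  have hUcard : U.card = Fintype.card ι := (Finset.mem_filter.mp hU).2
  rw [expand U]
  apply Finset.sum_congr _ (fun _ _ => rfl)
  ext f
  constructor
  · intro hf
    have h1 := Finset.mem_filter.mp hf
    have hinj : Function.Injective f := (Finset.mem_filter.mp h1.1).2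
    have himg : Finset.image f Finset.univ = U := h1.2
    refine Finset.mem_filter.mpr ⟨Fintype.mem_piFinset.mpr fun i => ?_, hinj⟩
    rw [← himg]
    exact Finset.mem_image_of_mem f (Finset.mem_univ i)
  · intro hf
    have h1 := Finset.mem_filter.mp hf
    have hmem : ∀ i, f i ∈ U := fun i => Fintype.mem_piFinset.mp h1.1 i
    have hinj : Function.Injective f := h1.2
    refine Finset.mem_filter.mpr ⟨Finset.mem_filter.mpr ⟨?_, hinj⟩, ?_⟩
    · exact Fintype.mem_piFinset.mpr fun i => Finset.mem_univ _
    · apply Finset.eq_of_subset_of_card_le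
      · intro s hs
        obtain ⟨i, _, rfl⟩ := Finset.mem_image.mp hs
        exact hmem i
      · rw [Finset.card_image_of_injective _ hinj, Finset.card_univ, hUcard]

/-- splitting `P * indDiag U * Qᵀ` as a product of square matrices via an equiv -/
lemma splitEq (P Q : Matrix ι S ℝ) (U : Finset S) (e : ι ≃ {x // x ∈ U}) :
    P * indDiag U * Qᵀ
      = (P.submatrix id (fun k => ((e k : S))))
        * (Q.submatrix id (fun k => ((e k : S))))ᵀ := by
  ext i i'
  rw [Matrix.mul_apply, Matrix.mul_apply]
  simp only [indDiag, Matrix.mul_diagonal, Matrix.transpose_apply, Matrix.submatrix_apply, id_eq]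
  rw [show ∑ s, P i s * (if s ∈ U then (1:ℝ) else 0) * Q i' s
      = ∑ s, (if s ∈ U then P i s * Q i' s else 0) by
    refine Finset.sum_congr rfl fun s _ => by split <;> simp_all]
  rw [Finset.sum_ite_mem, Finset.univ_inter, ← Finset.sum_coe_sort]
  exact (Equiv.sum_comp e (fun u : {x // x ∈ U} => P i (u : S) * Q i' (u : S))).symm

lemma splitDet (P Q : Matrix ι S ℝ) (U : Finset S) (e : ι ≃ {x // x ∈ U}) :
    (P * indDiag U * Qᵀ).det
      = (P.submatrix id (fun k => ((e k : S)))).det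
        * (Q.submatrix id (fun k => ((e k : S)))).det := by
  rw [splitEq P Q U e, Matrix.det_mul, Matrix.det_transpose]

end CB

/-- determinantal measures: if `MMᵗ` is invertible and
`P = Mᵗ(MMᵗ)⁻¹M`, then `Σ_{T ⊇ B, |T| = r} det(M_{•,T})² = det(MMᵗ) · det P_{B,B}`;
equivalently, the determinantal measure of `{T : T ⊇ B}` equals `det P_{B,B}`. -/
theorem determinantal_measure {S : Type*} [Fintype S] [DecidableEq S]
    (r : ℕ) (M : Matrix (Fin r) S ℝ) (hM : IsUnit (M * Mᵀ)) (B : Finset S) :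
    (∑ T ∈ Finset.univ.filter (fun T : Finset S => T.card = r ∧ B ⊆ T),
        detSq (colSub M T)
      = (M * Mᵀ).det *
        ((Mᵀ * (M * Mᵀ)⁻¹ * M).submatrix
          (fun b : B => (b : S)) (fun b : B => (b : S))).det) ∧
    (∑ T ∈ Finset.univ.filter (fun T : Finset S => T.card = r ∧ B ⊆ T),
        detSq (colSub M T) / (M * Mᵀ).det
      = ((Mᵀ * (M * Mᵀ)⁻¹ * M).submatrix
          (fun b : B => (b : S)) (fun b : B => (b : S))).det) := by
  classical
  haveI : Invertible (M * Mᵀ) := hM.invertible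
  set A := M * Mᵀ with hA
  set X : Matrix (Fin r) {x // x ∈ B} ℝ := M.submatrix id (fun β : {x // x ∈ B} => (β : S))
    with hXdef
  set E : Matrix {x // x ∈ B} S ℝ := Matrix.of fun β s => if (β : S) = s then 1 else 0
    with hEdef
  set N₁ : Matrix (Fin r ⊕ {x // x ∈ B}) (S ⊕ {x // x ∈ B}) ℝ := Matrix.fromBlocks M 0 E 1
    with hN₁
  set N₂ : Matrix (Fin r ⊕ {x // x ∈ B}) (S ⊕ {x // x ∈ B}) ℝ := Matrix.fromBlocks M 0 E (-1)
    with hN₂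
  have hEE : E * Eᵀ = 1 := by
    ext β β'
    simp only [Matrix.mul_apply, hEdef, Matrix.of_apply, Matrix.transpose_apply,
      ite_mul, one_mul, zero_mul, Matrix.one_apply]
    rw [Finset.sum_ite_eq Finset.univ (β : S) (fun s => if (β' : S) = s then (1:ℝ) else 0)]
    by_cases h : β = β'
    · subst h; simp
    · have h' : (β' : S) ≠ β := fun hc => h (Subtype.ext hc.symm)
      simp [h, h']
  have hMEt : M * Eᵀ = X := by
    ext i β
    simp only [Matrix.mul_apply, hEdef, hXdef, Matrix.of_apply, Matrix.transpose_apply,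
      Matrix.submatrix_apply, id_eq, mul_ite, mul_one, mul_zero]
    rw [Finset.sum_ite_eq Finset.univ (β : S) (fun s => M i s)]
    simp
  have hEMt : E * Mᵀ = Xᵀ := by
    rw [← Matrix.transpose_transpose E, ← Matrix.transpose_mul, hMEt]
  have hProd : N₁ * N₂ᵀ = Matrix.fromBlocks A X Xᵀ 0 := by
    rw [hN₁, hN₂, Matrix.fromBlocks_transpose, Matrix.fromBlocks_multiply]
    rw [Matrix.transpose_zero, Matrix.transpose_neg, Matrix.transpose_one]
    simp only [Matrix.mul_zero, Matrix.zero_mul, Matrix.mul_neg, Matrix.mul_one,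
      Matrix.one_mul, add_zero, zero_add, hEE, hMEt, hEMt, ← hA]
    rw [add_neg_cancel]
    simp
  have hPsub : Xᵀ * A⁻¹ * X
      = (Mᵀ * A⁻¹ * M).submatrix (fun b : {x // x ∈ B} => (b : S))
          (fun b : {x // x ∈ B} => (b : S)) := by
    ext β β'
    simp [Matrix.mul_apply, hXdef]
  have hdetProd : (N₁ * N₂ᵀ).det
      = (-1) ^ B.card * (A.det *
          ((Mᵀ * A⁻¹ * M).submatrix (fun b : {x // x ∈ B} => (b : S))
            (fun b : {x // x ∈ B} => (b : S))).det) := by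
    rw [hProd, Matrix.det_fromBlocks₁₁, invOf_eq_nonsing_inv, zero_sub, Matrix.det_neg,
      hPsub, Fintype.card_coe]
    ring
  have hcardι : Fintype.card (Fin r ⊕ {x // x ∈ B}) = r + B.card := by
    simp [Fintype.card_sum, Fintype.card_coe]
  -- step L
  have stepL : ∀ U : Finset (S ⊕ {x // x ∈ B}), U.card = r + B.card →
      (N₁ * indDiag U * N₂ᵀ).det
        = if (∀ β : {x // x ∈ B}, β ∈ U.toRight ∨ (β : S) ∈ U.toLeft) then
            (-1 : ℝ) ^ U.toRight.card *
              (M * indDiag (U.toLeft.filter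
                (fun s => s ∉ B ∨ s ∈ U.toRight.image (fun β : {x // x ∈ B} => (β : S)))) * Mᵀ).det
          else 0 := by
    intro U hU
    set T' : Finset S := U.toLeft with hT'
    set V : Finset {x // x ∈ B} := U.toRight with hV
    set Vs : Finset S := V.image (fun β : {x // x ∈ B} => (β : S)) with hVs
    set T : Finset S := T'.filter (fun s => s ∉ B ∨ s ∈ Vs) with hT
    have hmemVs : ∀ β : {x // x ∈ B}, (β : S) ∈ Vs ↔ β ∈ V := by
      intro β
      simp only [hVs, Finset.mem_image]
      constructor
      · rintro ⟨β', hβ', hco⟩; exact Subtype.ext hco ▸ hβ'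
      · exact fun h => ⟨β, h, rfl⟩
    -- the indicator diagonal splits into blocks
    have hblk : indDiag U = Matrix.fromBlocks (indDiag T') 0 0 (indDiag V) := by
      ext i j
      cases i <;> cases j <;>
        simp [indDiag, Matrix.diagonal_apply, Matrix.fromBlocks, hT', hV, Finset.mem_toLeft,
          Finset.mem_toRight, Sum.inl.injEq, Sum.inr.injEq]
    -- the sign-diagonal relation between N₂ and N₁
    set sgn : S ⊕ {x // x ∈ B} → ℝ := Sum.elim (fun _ => 1) (fun _ => -1) with hsgn
    have hN₂σ : N₂ = N₁ * Matrix.diagonal sgn := by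
      ext i c
      cases i <;> cases c <;>
        simp [hN₁, hN₂, Matrix.mul_diagonal, Matrix.fromBlocks, hsgn, Matrix.one_apply]
    -- equiv between row type and U
    have e : (Fin r ⊕ {x // x ∈ B}) ≃ {x // x ∈ U} :=
      Fintype.equivOfCardEq (by rw [hcardι, Fintype.card_coe, hU])
    -- reduce N₂ to N₁ with sign
    have hsub₂ : N₂.submatrix id (fun k => ((e k : S ⊕ {x // x ∈ B})))
        = (N₁.submatrix id (fun k => ((e k : S ⊕ {x // x ∈ B}))))
          * Matrix.diagonal (fun k => sgn (e k)) := by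
      ext i k
      simp [hN₂σ, Matrix.mul_diagonal, Matrix.submatrix_apply]
    have hsgnprod : (∏ k, sgn (e k)) = (-1 : ℝ) ^ V.card := by
      rw [Equiv.prod_comp e (fun u : {x // x ∈ U} => sgn u), Finset.prod_coe_sort]
      conv_lhs => rw [← Finset.toLeft_disjSum_toRight (u := U)]
      rw [Finset.prod_disjSum]
      simp [hsgn, hV]
    have hsign : (N₁ * indDiag U * N₂ᵀ).det
        = (-1 : ℝ) ^ V.card * (N₁ * indDiag U * N₁ᵀ).det := by
      rw [splitDet N₁ N₂ U e, splitDet N₁ N₁ U e, hsub₂, Matrix.det_mul,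
        Matrix.det_diagonal, hsgnprod]
      ring
    -- block decomposition of N₁ * indDiag U * N₁ᵀ
    set dS : S → ℝ := fun s => (if s ∈ T' then (1:ℝ) else 0) + (if s ∈ Vs then 1 else 0)
      with hdS
    set X' : Matrix (Fin r) {x // x ∈ B} ℝ := M * indDiag T' * Eᵀ with hX'def
    set Y' : Matrix {x // x ∈ B} (Fin r) ℝ := E * indDiag T' * Mᵀ with hY'def
    set Dm : Matrix {x // x ∈ B} {x // x ∈ B} ℝ := E * indDiag T' * Eᵀ + indDiag V with hDmdef
    have hW : N₁ * indDiag U * N₁ᵀ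
        = Matrix.fromBlocks (M * indDiag T' * Mᵀ) X' Y' Dm := by
      rw [hblk, hN₁, Matrix.fromBlocks_transpose, Matrix.fromBlocks_multiply,
        Matrix.fromBlocks_multiply]
      simp only [Matrix.mul_zero, Matrix.zero_mul, Matrix.mul_one, Matrix.one_mul,
        Matrix.transpose_zero, Matrix.transpose_one, add_zero, zero_add, Matrix.zero_mul]
      rfl
    have hDm : Dm = Matrix.diagonal (fun β : {x // x ∈ B} => dS (β : S)) := by
      rw [hDmdef]
      have h1 : E * indDiag T' * Eᵀ
          = Matrix.diagonal (fun β : {x // x ∈ B} => if (β : S) ∈ T' then (1:ℝ) else 0) := by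
        ext β β'
        rw [Matrix.mul_apply]
        rw [Finset.sum_eq_single (β : S)
          (fun x _ hne => by
            have hfx : ((β : S) = x) = False := eq_false (fun hc => hne hc.symm)
            simp [indDiag, Matrix.mul_diagonal, hEdef, hfx])
          (fun hab => absurd (Finset.mem_univ _) hab)]
        by_cases h : β = β'
        · subst h
          simp [indDiag, Matrix.mul_diagonal, hEdef, Matrix.diagonal_apply_eq]
        · have hne : (β : S) ≠ (β' : S) := fun hc => h (Subtype.ext hc)
          have hfx : ((β' : S) = (β : S)) = False := eq_false (fun hc => hne hc.symm)
          simp [indDiag, Matrix.mul_diagonal, hEdef, Matrix.diagonal_apply_ne _ h, hfx]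
      rw [h1]
      have h2 : indDiag V
          = Matrix.diagonal (fun β : {x // x ∈ B} => if (β : S) ∈ Vs then (1:ℝ) else 0) := by
        unfold indDiag
        congr 1
        funext β
        simp [hmemVs]
      rw [h2, Matrix.diagonal_add]
    have hY' : Y' = Matrix.of fun (β : {x // x ∈ B}) i =>
        (if (β : S) ∈ T' then (1:ℝ) else 0) * M i (β : S) := by
      ext β i
      rw [hY'def, Matrix.mul_apply]
      rw [Finset.sum_eq_single (β : S)
        (fun x _ hne => by
          have hfx : ((β : S) = x) = False := eq_false (fun hc => hne hc.symm)
          simp [indDiag, Matrix.mul_diagonal, hEdef, hfx])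
        (fun hab => absurd (Finset.mem_univ _) hab)]
      simp [indDiag, Matrix.mul_diagonal, hEdef, mul_comm]
    have hX' : X' = Matrix.of fun i (β : {x // x ∈ B}) =>
        (if (β : S) ∈ T' then (1:ℝ) else 0) * M i (β : S) := by
      ext i β
      rw [hX'def, Matrix.mul_apply]
      rw [Finset.sum_eq_single (β : S)
        (fun x _ hne => by
          have hfx : ((β : S) = x) = False := eq_false (fun hc => hne hc.symm)
          simp [indDiag, Matrix.mul_diagonal, hEdef, hfx])
        (fun hab => absurd (Finset.mem_univ _) hab)]
      simp [indDiag, Matrix.mul_diagonal, hEdef, mul_comm]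
    by_cases hcond : ∀ β : {x // x ∈ B}, β ∈ V ∨ (β : S) ∈ T'
    · -- main case
      rw [if_pos hcond, hsign, hW]
      have hVsB : Vs ⊆ B := by
        intro s hs
        obtain ⟨β, _, rfl⟩ := Finset.mem_image.mp hs
        exact β.2
      have hdSval : ∀ β : {x // x ∈ B},
          dS (β : S) = if ((β : S) ∈ T' ∧ (β : S) ∈ Vs) then (2:ℝ) else 1 := by
        intro β
        rcases hcond β with hv | ht
        · have hvs : (β : S) ∈ Vs := (hmemVs β).mpr hv
          by_cases ht : (β : S) ∈ T' <;> simp [hdS, ht, hvs] <;> try norm_num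
        · by_cases hvs : (β : S) ∈ Vs <;> simp [hdS, ht, hvs] <;> try norm_num
      have hdne : ∀ β : {x // x ∈ B}, dS (β : S) ≠ 0 := by
        intro β
        rw [hdSval β]
        split <;> norm_num
      set Dinv : Matrix {x // x ∈ B} {x // x ∈ B} ℝ :=
        Matrix.diagonal (fun β : {x // x ∈ B} => (dS (β : S))⁻¹) with hDinv
      have hDD : Dm * Dinv = 1 := by
        rw [hDm, hDinv, Matrix.diagonal_mul_diagonal]
        rw [show (fun β : {x // x ∈ B} => dS (β : S) * (dS (β : S))⁻¹) = fun _ => (1:ℝ) by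
          funext β; exact mul_inv_cancel₀ (hdne β)]
        exact Matrix.diagonal_one
      haveI hInvD : Invertible Dm := invertibleOfRightInverse _ _ hDD
      have hinvOf : ⅟Dm = Dinv := invOf_eq_right_inv hDD
      set c : S → ℝ := fun s => (if s ∈ T' then (1:ℝ) else 0)
          - (if s ∈ B then (if s ∈ T' then (1:ℝ) else 0) * (dS s)⁻¹ else 0) with hc
      have hXDY : X' * Dinv * Y' = M * Matrix.diagonal
          (fun s => if s ∈ B then (if s ∈ T' then (1:ℝ) else 0) * (dS s)⁻¹ else 0) * Mᵀ := by
        ext i i'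
        rw [Matrix.mul_apply, Matrix.mul_apply]
        simp only [hX', hY', hDinv, Matrix.mul_diagonal, Matrix.of_apply,
          Matrix.transpose_apply]
        have lhs_eq : ∀ β : {x // x ∈ B},
            (if (β : S) ∈ T' then (1:ℝ) else 0) * M i (β : S) * (dS (β : S))⁻¹
              * ((if (β : S) ∈ T' then (1:ℝ) else 0) * M i' (β : S))
            = M i (β : S) * ((if (β : S) ∈ T' then (1:ℝ) else 0) * (dS (β : S))⁻¹)
              * M i' (β : S) := by
          intro β; split <;> ring
        rw [Finset.sum_congr rfl (fun β _ => lhs_eq β)]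
        have rhs_eq : ∀ s : S,
            M i s * (if s ∈ B then (if s ∈ T' then (1:ℝ) else 0) * (dS s)⁻¹ else 0) * M i' s
            = if s ∈ B then M i s * ((if s ∈ T' then (1:ℝ) else 0) * (dS s)⁻¹) * M i' s
              else 0 := by
          intro s; split <;> ring
        rw [Finset.sum_congr rfl (fun s _ => rhs_eq s), Finset.sum_ite_mem,
          Finset.univ_inter, ← Finset.sum_coe_sort B
            (fun s => M i s * ((if s ∈ T' then (1:ℝ) else 0) * (dS s)⁻¹) * M i' s)]
      have hSchur : M * indDiag T' * Mᵀ - X' * Dinv * Y' = M * Matrix.diagonal c * Mᵀ := by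
        rw [hXDY]
        rw [show M * indDiag T' * Mᵀ
            = M * Matrix.diagonal (fun s => if s ∈ T' then (1:ℝ) else 0) * Mᵀ from rfl]
        rw [← Matrix.sub_mul, ← Matrix.mul_sub, ← Matrix.diagonal_sub]
      -- support and values of c
      have hc0 : ∀ s, s ∉ T → c s = 0 := by
        intro s hs
        by_cases hsT' : s ∈ T'
        · have hmem : s ∈ B ∧ s ∉ Vs := by
            by_contra hcon
            apply hs
            rw [hT, Finset.mem_filter]
            refine ⟨hsT', ?_⟩
            tauto
          have : dS s = 1 := by simp [hdS, hsT', hmem.2]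
          simp [hc, hsT', hmem.1, this]
        · simp [hc, hsT']
      have hcT : ∀ s ∈ T, c s = if s ∈ Vs then (2:ℝ)⁻¹ else 1 := by
        intro s hsT
        rw [hT, Finset.mem_filter] at hsT
        obtain ⟨hsT', hor⟩ := hsT
        by_cases hvs : s ∈ Vs
        · have hsB : s ∈ B := hVsB hvs
          have : dS s = 2 := by simp [hdS, hsT', hvs]; norm_num
          rw [hc]
          simp [hsT', hsB, this, hvs]
          norm_num
        · have hsB : s ∉ B := by tauto
          simp [hc, hsT', hsB, hvs]
      -- cardinality of T
      have hBVsub : B \ Vs ⊆ T' := by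
        intro s hs
        rw [Finset.mem_sdiff] at hs
        rcases hcond ⟨s, hs.1⟩ with hv | ht
        · exact absurd ((hmemVs ⟨s, hs.1⟩).mpr hv) hs.2
        · exact ht
      have hTsd : T = T' \ (B \ Vs) := by
        ext s
        rw [hT, Finset.mem_filter, Finset.mem_sdiff, Finset.mem_sdiff]
        tauto
      have hVscard : Vs.card = V.card :=
        Finset.card_image_of_injective V Subtype.val_injective
      have hTV : T'.card + V.card = r + B.card := by
        rw [← hU, ← Finset.card_toLeft_add_card_toRight]
      have hTcard : T.card = r := by
        rw [hTsd, Finset.card_sdiff_of_subset hBVsub, Finset.card_sdiff_of_subset hVsB, hVscard]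
        have h1 : Vs.card ≤ B.card := Finset.card_le_card hVsB
        have h2 : (B \ Vs).card ≤ T'.card := Finset.card_le_card hBVsub
        rw [Finset.card_sdiff_of_subset hVsB, hVscard] at h2
        omega
      have e₂ : Fin r ≃ {x // x ∈ T} :=
        Fintype.equivOfCardEq (by rw [Fintype.card_fin, Fintype.card_coe, hTcard])
      -- determinant of M * diagonal c * Mᵀ
      have hfac : M * Matrix.diagonal c * Mᵀ = M * indDiag T * (M * Matrix.diagonal c)ᵀ := by
        have hdc : indDiag T * Matrix.diagonal c = Matrix.diagonal c := by
          unfold indDiag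
          rw [Matrix.diagonal_mul_diagonal]
          have hfun : (fun s => (if s ∈ T then (1:ℝ) else 0) * c s) = c := by
            funext s
            by_cases hsT : s ∈ T
            · simp [hsT]
            · simp [hsT, hc0 s hsT]
          rw [hfun]
        rw [Matrix.transpose_mul, Matrix.diagonal_transpose, ← Matrix.mul_assoc,
          Matrix.mul_assoc M (indDiag T) (Matrix.diagonal c), hdc]
      have hsubc : (M * Matrix.diagonal c).submatrix id (fun k => ((e₂ k : S)))
          = (M.submatrix id (fun k => ((e₂ k : S))))
            * Matrix.diagonal (fun k => c ((e₂ k : S))) := by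
        ext i k
        simp [Matrix.mul_diagonal, Matrix.submatrix_apply]
      have hprodc : (∏ k, c ((e₂ k : S))) = ∏ s ∈ T, c s := by
        rw [Equiv.prod_comp e₂ (fun u : {x // x ∈ T} => c (u : S)), Finset.prod_coe_sort]
      have hdet1 : (M * Matrix.diagonal c * Mᵀ).det
          = (∏ s ∈ T, c s) * (M * indDiag T * Mᵀ).det := by
        rw [hfac, splitDet M (M * Matrix.diagonal c) T e₂, splitDet M M T e₂, hsubc,
          Matrix.det_mul, Matrix.det_diagonal, hprodc]
        ring
      -- the product of det Dm and ∏ c equals 1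
      have hDmdet : Dm.det = 2 ^ (Finset.univ.filter
          (fun β : {x // x ∈ B} => (β : S) ∈ T' ∧ (β : S) ∈ Vs)).card := by
        rw [hDm, Matrix.det_diagonal]
        rw [Finset.prod_congr rfl (fun β _ => hdSval β), Finset.prod_ite,
          Finset.prod_const, Finset.prod_const, one_pow, mul_one]
      have hcprod : (∏ s ∈ T, c s) = (2:ℝ)⁻¹ ^ (T.filter (fun s => s ∈ Vs)).card := by
        rw [Finset.prod_congr rfl hcT, Finset.prod_ite, Finset.prod_const,
          Finset.prod_const, one_pow, mul_one]
      have hcards : (Finset.univ.filter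
          (fun β : {x // x ∈ B} => (β : S) ∈ T' ∧ (β : S) ∈ Vs)).card
          = (T.filter (fun s => s ∈ Vs)).card := by
        refine Finset.card_bij (fun β _ => (β : S)) ?_ ?_ ?_
        · intro β hβ
          rw [Finset.mem_filter] at hβ ⊢
          refine ⟨?_, hβ.2.2⟩
          rw [hT, Finset.mem_filter]
          exact ⟨hβ.2.1, Or.inr hβ.2.2⟩
        · intro β _ β' _ h
          exact Subtype.ext h
        · intro s hs
          rw [Finset.mem_filter] at hs
          have hsT' : s ∈ T' := by
            have := hs.1; rw [hT, Finset.mem_filter] at this; exact this.1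
          exact ⟨⟨s, hVsB hs.2⟩, by simp [hsT', hs.2], rfl⟩
      have hprod1 : Dm.det * (∏ s ∈ T, c s) = 1 := by
        rw [hDmdet, hcprod, hcards, inv_pow, mul_inv_cancel₀]
        positivity
      rw [Matrix.det_fromBlocks₂₂, hinvOf, hSchur, hdet1]
      calc (-1:ℝ) ^ V.card * (Dm.det * ((∏ s ∈ T, c s) * (M * indDiag T * Mᵀ).det))
          = (Dm.det * (∏ s ∈ T, c s)) * ((-1:ℝ) ^ V.card * (M * indDiag T * Mᵀ).det) := by
            ring
        _ = (-1:ℝ) ^ V.card * (M * indDiag T * Mᵀ).det := by rw [hprod1, one_mul]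
    · -- degenerate case : a zero row
      rw [if_neg hcond, hsign, hW]
      push_neg at hcond
      obtain ⟨β₀, hβ₀V, hβ₀T⟩ := hcond
      rw [Matrix.det_eq_zero_of_row_eq_zero (Sum.inr β₀), mul_zero]
      intro j
      cases j with
      | inl i =>
        simp [Matrix.fromBlocks, hY', hβ₀T]
      | inr β' =>
        have hnv : (β₀ : S) ∉ Vs := fun hc => hβ₀V ((hmemVs β₀).mp hc)
        by_cases h : β₀ = β'
        · subst h
          simp [Matrix.fromBlocks, hDm, Matrix.diagonal_apply_eq, hdS, hβ₀T, hnv]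
        · simp [Matrix.fromBlocks, hDm, Matrix.diagonal_apply_ne _ h]
  -- apply Cauchy–Binet and rewrite each term via stepL
  have hCB := cauchyBinet N₁ N₂
  rw [hcardι] at hCB
  have hCB2 : (N₁ * N₂ᵀ).det
      = ∑ U ∈ Finset.univ.filter
          (fun U : Finset (S ⊕ {x // x ∈ B}) => U.card = r + B.card),
          (if (∀ β : {x // x ∈ B}, β ∈ U.toRight ∨ (β : S) ∈ U.toLeft) then
            (-1 : ℝ) ^ U.toRight.card *
              (M * indDiag (U.toLeft.filter
                (fun s => s ∉ B ∨ s ∈ U.toRight.image (fun β : {x // x ∈ B} => (β : S))))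
                * Mᵀ).det
          else 0) := by
    rw [hCB]
    exact Finset.sum_congr rfl fun U hU => stepL U (Finset.mem_filter.mp hU).2
  -- reindex over pairs of finsets
  have hPairs : (N₁ * N₂ᵀ).det
      = ∑ p ∈ Finset.univ.filter
          (fun p : Finset S × Finset {x // x ∈ B} => p.1.card + p.2.card = r + B.card),
          (if (∀ β : {x // x ∈ B}, β ∈ p.2 ∨ (β : S) ∈ p.1) then
            (-1 : ℝ) ^ p.2.card *
              (M * indDiag (p.1.filter
                (fun s => s ∉ B ∨ s ∈ p.2.image (fun β : {x // x ∈ B} => (β : S)))) * Mᵀ).det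
          else 0) := by
    rw [hCB2]
    refine Finset.sum_nbij' (fun U => (U.toLeft, U.toRight)) (fun p => p.1.disjSum p.2)
      ?_ ?_ ?_ ?_ ?_
    · intro U hU
      simp only [Finset.mem_filter, Finset.mem_univ, true_and] at hU ⊢
      rw [Finset.card_toLeft_add_card_toRight, hU]
    · intro p hp
      simp only [Finset.mem_filter, Finset.mem_univ, true_and] at hp ⊢
      rw [Finset.card_disjSum, hp]
    · intro U _
      exact Finset.toLeft_disjSum_toRight
    · intro p _
      ext : 1 <;> simp [Finset.toLeft_disjSum, Finset.toRight_disjSum]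
    · intro U _
      rfl
  -- turn into a double sum and swap
  have hDouble : (N₁ * N₂ᵀ).det
      = ∑ V : Finset {x // x ∈ B}, ∑ T' : Finset S,
          (if (T'.card + V.card = r + B.card
              ∧ ∀ β : {x // x ∈ B}, β ∈ V ∨ (β : S) ∈ T') then
            (-1 : ℝ) ^ V.card *
              (M * indDiag (T'.filter
                (fun s => s ∉ B ∨ s ∈ V.image (fun β : {x // x ∈ B} => (β : S)))) * Mᵀ).det
          else 0) := by
    rw [hPairs, Finset.sum_filter, Fintype.sum_prod_type, Finset.sum_comm]
    refine Finset.sum_congr rfl fun V _ => Finset.sum_congr rfl fun T' _ => ?_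
    by_cases h1 : T'.card + V.card = r + B.card <;>
      by_cases h2 : ∀ β : {x // x ∈ B}, β ∈ V ∨ (β : S) ∈ T' <;>
      simp [h1, h2]
  -- for fixed V, change variables T' ↦ T
  have hInner : ∀ V : Finset {x // x ∈ B},
      (∑ T' : Finset S,
          (if (T'.card + V.card = r + B.card
              ∧ ∀ β : {x // x ∈ B}, β ∈ V ∨ (β : S) ∈ T') then
            (-1 : ℝ) ^ V.card *
              (M * indDiag (T'.filter
                (fun s => s ∉ B ∨ s ∈ V.image (fun β : {x // x ∈ B} => (β : S)))) * Mᵀ).det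
          else 0))
      = ∑ T : Finset S,
          (if (T.card = r ∧ T ∩ (B \ V.image (fun β : {x // x ∈ B} => (β : S))) = ∅) then
            (-1 : ℝ) ^ V.card * (M * indDiag T * Mᵀ).det
          else 0) := by
    intro V
    have hVsB : (V.image (fun β : {x // x ∈ B} => (β : S))) ⊆ B := by
      intro s hs
      obtain ⟨β, _, rfl⟩ := Finset.mem_image.mp hs
      exact β.2
    have hmemVs : ∀ β : {x // x ∈ B}, (β : S) ∈ (V.image (fun β : {x // x ∈ B} => (β : S))) ↔ β ∈ V := by
      intro β
      simp only [Finset.mem_image]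
      constructor
      · rintro ⟨β', hβ', hco⟩; exact Subtype.ext hco ▸ hβ'
      · exact fun h => ⟨β, h, rfl⟩
    have hVscard : (V.image (fun β : {x // x ∈ B} => (β : S))).card = V.card :=
      Finset.card_image_of_injective V Subtype.val_injective
    have hVsBcard : (V.image (fun β : {x // x ∈ B} => (β : S))).card ≤ B.card := Finset.card_le_card hVsB
    have hTofsd : ∀ T'' : Finset S,
        T''.filter (fun s => s ∉ B ∨ s ∈ (V.image (fun β : {x // x ∈ B} => (β : S)))) = T'' \ (B \ (V.image (fun β : {x // x ∈ B} => (β : S)))) := by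
      intro T''
      ext s
      rw [Finset.mem_filter, Finset.mem_sdiff, Finset.mem_sdiff]
      tauto
    rw [← Finset.sum_filter, ← Finset.sum_filter]
    refine Finset.sum_nbij' (fun T' => T'.filter (fun s => s ∉ B ∨ s ∈ (V.image (fun β : {x // x ∈ B} => (β : S)))))
      (fun T => T ∪ (B \ (V.image (fun β : {x // x ∈ B} => (β : S))))) ?_ ?_ ?_ ?_ ?_
    · intro T' hT'
      rw [Finset.mem_filter] at hT'
      obtain ⟨_, hcard, hcond⟩ := hT'
      have hBVsub : B \ (V.image (fun β : {x // x ∈ B} => (β : S))) ⊆ T' := by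
        intro s hs
        rw [Finset.mem_sdiff] at hs
        rcases hcond ⟨s, hs.1⟩ with hv | ht
        · exact absurd ((hmemVs ⟨s, hs.1⟩).mpr hv) hs.2
        · exact ht
      rw [Finset.mem_filter]
      refine ⟨Finset.mem_univ _, ?_, ?_⟩
      · simp only [hTofsd]
        rw [Finset.card_sdiff_of_subset hBVsub, Finset.card_sdiff_of_subset hVsB, hVscard]
        have h2 : (B \ (V.image (fun β : {x // x ∈ B} => (β : S)))).card ≤ T'.card := Finset.card_le_card hBVsub
        rw [Finset.card_sdiff_of_subset hVsB, hVscard] at h2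
        omega
      · simp only [hTofsd]
        exact Finset.sdiff_inter_self _ _
    · intro T hT
      rw [Finset.mem_filter] at hT
      obtain ⟨_, hcard, hdisj⟩ := hT
      have hdis : Disjoint T (B \ (V.image (fun β : {x // x ∈ B} => (β : S)))) := Finset.disjoint_iff_inter_eq_empty.mpr hdisj
      rw [Finset.mem_filter]
      refine ⟨Finset.mem_univ _, ?_, ?_⟩
      · rw [Finset.card_union_of_disjoint hdis, Finset.card_sdiff_of_subset hVsB, hVscard]
        omega
      · intro β
        by_cases hv : β ∈ V
        · exact Or.inl hv
        · refine Or.inr (Finset.mem_union_right _ ?_)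
          rw [Finset.mem_sdiff]
          exact ⟨β.2, fun hc => hv ((hmemVs β).mp hc)⟩
    · intro T' hT'
      rw [Finset.mem_filter] at hT'
      obtain ⟨_, _, hcond⟩ := hT'
      have hBVsub : B \ (V.image (fun β : {x // x ∈ B} => (β : S))) ⊆ T' := by
        intro s hs
        rw [Finset.mem_sdiff] at hs
        rcases hcond ⟨s, hs.1⟩ with hv | ht
        · exact absurd ((hmemVs ⟨s, hs.1⟩).mpr hv) hs.2
        · exact ht
      simp only [hTofsd]
      exact Finset.sdiff_union_of_subset hBVsub
    · intro T hT
      rw [Finset.mem_filter] at hT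
      have hdis : Disjoint T (B \ (V.image (fun β : {x // x ∈ B} => (β : S)))) := Finset.disjoint_iff_inter_eq_empty.mpr hT.2.2
      simp only [hTofsd]
      exact Finset.union_sdiff_cancel_right hdis
    · intro T' _
      rfl
  -- inclusion–exclusion over V for fixed T
  have hIE : ∀ T : Finset S,
      (∑ V : Finset {x // x ∈ B},
        if T ∩ (B \ V.image (fun β : {x // x ∈ B} => (β : S))) = ∅
          then (-1:ℝ) ^ V.card else 0)
      = if B ⊆ T then (-1:ℝ) ^ B.card else 0 := by
    intro T
    set W₀ : Finset {x // x ∈ B} := Finset.univ.filter (fun β => (β : S) ∈ T) with hW₀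
    have hiff : ∀ V : Finset {x // x ∈ B},
        (T ∩ (B \ V.image (fun β : {x // x ∈ B} => (β : S))) = ∅) ↔ W₀ ⊆ V := by
      intro V
      constructor
      · intro h β hβ
        rw [hW₀, Finset.mem_filter] at hβ
        by_contra hβV
        have hs : (β : S) ∈ T ∩ (B \ V.image (fun β : {x // x ∈ B} => (β : S))) := by
          rw [Finset.mem_inter, Finset.mem_sdiff]
          refine ⟨hβ.2, β.2, fun hc => ?_⟩
          obtain ⟨β', hβ', hco⟩ := Finset.mem_image.mp hc
          exact hβV (Subtype.ext hco ▸ hβ')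
        rw [h] at hs
        exact absurd hs (Finset.notMem_empty _)
      · intro h
        rw [Finset.eq_empty_iff_forall_notMem]
        intro s hs
        rw [Finset.mem_inter, Finset.mem_sdiff] at hs
        obtain ⟨hsT, hsB, hsV⟩ := hs
        exact hsV (Finset.mem_image.mpr ⟨⟨s, hsB⟩,
          h (by rw [hW₀, Finset.mem_filter]; exact ⟨Finset.mem_univ _, hsT⟩), rfl⟩)
    rw [Finset.sum_congr rfl (fun V _ => if_congr (hiff V) rfl rfl), ← Finset.sum_filter]
    rw [Finset.sum_nbij' (fun V => V \ W₀) (fun Y => W₀ ∪ Y)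
      (g := fun Y => (-1:ℝ) ^ (W₀.card + Y.card))
      (fun V hV => by
        rw [Finset.mem_filter] at hV
        exact Finset.mem_powerset.mpr
          (Finset.sdiff_subset_sdiff (Finset.subset_univ V) Finset.Subset.rfl))
      (fun Y hY => by
        rw [Finset.mem_filter]
        exact ⟨Finset.mem_univ _, Finset.subset_union_left⟩)
      (fun V hV => by
        rw [Finset.mem_filter] at hV
        exact Finset.union_sdiff_of_subset hV.2)
      (fun Y hY => by
        have hsub := Finset.mem_powerset.mp hY
        have hdisj : Disjoint W₀ Y := Finset.disjoint_left.mpr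
          (fun a haW haY => (Finset.mem_sdiff.mp (hsub haY)).2 haW)
        exact Finset.union_sdiff_cancel_left hdisj)
      (fun V hV => by
        rw [Finset.mem_filter] at hV
        rw [← Finset.card_sdiff_add_card_eq_card hV.2, add_comm])]
    have hsplit : (∑ Y ∈ (Finset.univ \ W₀).powerset, (-1:ℝ) ^ (W₀.card + Y.card))
        = (-1:ℝ) ^ W₀.card * ∑ Y ∈ (Finset.univ \ W₀).powerset, (-1:ℝ) ^ Y.card := by
      rw [Finset.mul_sum]
      exact Finset.sum_congr rfl fun Y _ => by rw [pow_add]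
    have hR : (∑ Y ∈ (Finset.univ \ W₀).powerset, (-1:ℝ) ^ Y.card)
        = if Finset.univ \ W₀ = ∅ then 1 else 0 := by
      exact_mod_cast Finset.sum_powerset_neg_one_pow_card (x := Finset.univ \ W₀)
    rw [hsplit, hR]
    by_cases hBT : B ⊆ T
    · have hW₀univ : W₀ = Finset.univ := by
        ext β
        simp [hW₀, hBT β.2]
      rw [if_pos hBT, hW₀univ, Finset.sdiff_self]
      simp [Finset.card_univ, Fintype.card_coe]
    · obtain ⟨s, hsB, hsT⟩ := Finset.not_subset.mp hBT
      have hmem : (⟨s, hsB⟩ : {x // x ∈ B}) ∈ Finset.univ \ W₀ := by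
        rw [Finset.mem_sdiff, hW₀, Finset.mem_filter]
        exact ⟨Finset.mem_univ _, fun hc => hsT hc.2⟩
      rw [if_neg (Finset.ne_empty_of_mem hmem), if_neg hBT, mul_zero]
  -- per-T evaluation
  have hPerT : ∀ T : Finset S,
      (∑ V : Finset {x // x ∈ B},
          (if (T.card = r ∧ T ∩ (B \ V.image (fun β : {x // x ∈ B} => (β : S))) = ∅) then
            (-1 : ℝ) ^ V.card * (M * indDiag T * Mᵀ).det
          else 0))
      = if (T.card = r ∧ B ⊆ T) then
          (-1:ℝ) ^ B.card * (M * indDiag T * Mᵀ).det else 0 := by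
    intro T
    by_cases hTr : T.card = r
    · have hterm : ∀ V : Finset {x // x ∈ B},
          (if (T.card = r ∧ T ∩ (B \ V.image (fun β : {x // x ∈ B} => (β : S))) = ∅) then
            (-1 : ℝ) ^ V.card * (M * indDiag T * Mᵀ).det
          else 0)
          = (if T ∩ (B \ V.image (fun β : {x // x ∈ B} => (β : S))) = ∅
              then (-1:ℝ) ^ V.card else 0) * (M * indDiag T * Mᵀ).det := by
        intro V
        by_cases h : T ∩ (B \ V.image (fun β : {x // x ∈ B} => (β : S))) = ∅ <;>
          simp [hTr, h]
      rw [Finset.sum_congr rfl (fun V _ => hterm V), ← Finset.sum_mul, hIE T]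
      by_cases hBT : B ⊆ T
      · rw [if_pos hBT, if_pos ⟨hTr, hBT⟩]
      · rw [if_neg hBT, if_neg (fun hc => hBT hc.2), zero_mul]
    · rw [if_neg (fun hc => hTr hc.1)]
      exact Finset.sum_eq_zero fun V _ => if_neg (fun hc => hTr hc.1)
  -- assemble the combinatorial identity
  have hKey : (M * Mᵀ).det *
      ((Mᵀ * (M * Mᵀ)⁻¹ * M).submatrix (fun b : {x // x ∈ B} => (b : S))
        (fun b : {x // x ∈ B} => (b : S))).det
      = ∑ T ∈ Finset.univ.filter (fun T : Finset S => T.card = r ∧ B ⊆ T),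
          (M * indDiag T * Mᵀ).det := by
    have h1 : (N₁ * N₂ᵀ).det
        = (-1:ℝ) ^ B.card * ∑ T ∈ Finset.univ.filter
            (fun T : Finset S => T.card = r ∧ B ⊆ T), (M * indDiag T * Mᵀ).det := by
      rw [hDouble, Finset.sum_congr rfl (fun V _ => hInner V), Finset.sum_comm,
        Finset.sum_congr rfl (fun T _ => hPerT T), ← Finset.sum_filter, Finset.mul_sum]
    rw [hdetProd] at h1
    have hpow : ((-1:ℝ) ^ B.card) ≠ 0 := pow_ne_zero _ (by norm_num)
    exact mul_left_cancel₀ hpow h1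
  -- identify detSq with the Gram determinant
  have hdetSq : ∀ T : Finset S, T.card = r →
      detSq (colSub M T) = (M * indDiag T * Mᵀ).det := by
    intro T hT
    have hne : Nonempty (Fin r ≃ {τ // τ ∈ T}) :=
      ⟨Fintype.equivOfCardEq (by rw [Fintype.card_fin, Fintype.card_coe, hT])⟩
    rw [detSq, dif_pos hne, splitDet M M T hne.some]
    rw [show (colSub M T).submatrix id hne.some
        = M.submatrix id (fun k => ((hne.some k : S))) from rfl]
    ring
  have part1 : (∑ T ∈ Finset.univ.filter (fun T : Finset S => T.card = r ∧ B ⊆ T),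
      detSq (colSub M T))
      = (M * Mᵀ).det *
        ((Mᵀ * (M * Mᵀ)⁻¹ * M).submatrix (fun b : {x // x ∈ B} => (b : S))
          (fun b : {x // x ∈ B} => (b : S))).det := by
    rw [hKey]
    refine Finset.sum_congr rfl fun T hT => ?_
    exact hdetSq T (Finset.mem_filter.mp hT).2.1
  refine ⟨part1, ?_⟩
  have hAdet : (M * Mᵀ).det ≠ 0 :=
    ((Matrix.isUnit_iff_isUnit_det _).mp hM).ne_zero
  rw [← Finset.sum_div, part1, mul_div_cancel_left₀ _ hAdet]
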